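/- Let p : S → A be a quasi-constant pattern with nonconstant term r ∈ S, r ≠ e, and let a := p(r) (so a ≠ p(e)). Then τ_p^a is idempotent if and only if r² ∈ S. -/

import Mathlib

variable {G A : Type*}

def shift [Group G] (g : G) (x : G → A) : G → A := fun h => x (g⁻¹ * h)

def restrictPat (S : Finset G) (x : G → A) : S → A := fun s => x s

def muP [Group G] [DecidableEq A] (S : Finset G) (p : S → A) (a : A)
    (he : (1 : G) ∈ S) (z : S → A) : A :=
  if z = p then a else z ⟨1, he⟩

def tauP [Group G] [DecidableEq A] (S : Finset G) (p : S → A) (a : A)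
    (he : (1 : G) ∈ S) (x : G → A) : G → A :=
  fun g => muP S p a he (restrictPat S (shift g⁻¹ x))

lemma tauP_apply [Group G] [DecidableEq A] (S : Finset G) (p : S → A) (a : A)
    (he : (1 : G) ∈ S) (x : G → A) (g : G) :
    tauP S p a he x g = if ∀ s : S, x (g * s) = p s then a else x g := by
  unfold tauP muP restrictPat shift
  simp only [inv_inv, mul_one, funext_iff]

theorem quasiConstant_nonidentity_term_idempotent_iff [Group G] [Fintype A] [DecidableEq A]
    (hA : 2 ≤ Fintype.card A) (S : Finset G) (he : (1 : G) ∈ S)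
    (p : S → A) (r : G) (hr : r ∈ S) (hre : r ≠ 1)
    (hq : ∀ s : S, (s : G) ≠ r → p s = p ⟨1, he⟩)
    (hnc : p ⟨r, hr⟩ ≠ p ⟨1, he⟩) :
    tauP S p (p ⟨r, hr⟩) he ∘ tauP S p (p ⟨r, hr⟩) he = tauP S p (p ⟨r, hr⟩) he ↔
      r * r ∈ S := by
  classical
  set a := p ⟨r, hr⟩ with ha
  set b := p ⟨1, he⟩ with hb
  have hrr_ne_r : r * r ≠ r := fun h => hre (mul_eq_left.mp h)
  constructor
  · intro hid
    by_contra hS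
    set x : G → A := fun h => if h = r * r then a else b with hx
    -- pattern appears in x at r
    have hyr : tauP S p a he x r = a := by
      rw [tauP_apply, if_pos]
      intro s
      by_cases hs : (s : G) = r
      · have hseq : s = ⟨r, hr⟩ := Subtype.ext hs
        rw [hseq]
        simp [hx]
        exact ha
      · have hne : r * (s : G) ≠ r * r := fun h => hs (mul_left_cancel h)
        rw [hq s hs]
        simp [hx, hne]
    -- τ(x) is b at every s ∈ S with s ≠ r
    have hys : ∀ s : S, (s : G) ≠ r → tauP S p a he x s = b := by
      intro s hs
      rw [tauP_apply, if_neg]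
      · have : (s : G) ≠ r * r := fun h => hS (h ▸ s.2)
        simp [hx, this]
      · intro H
        have h1 := H ⟨r, hr⟩
        have hne : (s : G) * r ≠ r * r := fun h => hs (mul_right_cancel h)
        rw [show p ⟨r, hr⟩ = a from rfl] at h1
        simp only [hx, if_neg hne] at h1
        exact hnc (h1.symm ▸ rfl)
    -- hence the pattern appears in τ(x) at 1
    have hy1 : tauP S p a he (tauP S p a he x) 1 = a := by
      rw [tauP_apply, if_pos]
      intro s
      rw [one_mul]
      by_cases hs : (s : G) = r
      · have hseq : s = ⟨r, hr⟩ := Subtype.ext hs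
        rw [hseq]
        exact hyr
      · rw [hq s hs]
        exact hys s hs
    have hxy1 : tauP S p a he x 1 = b := hys ⟨1, he⟩ (fun h => hre h.symm)
    have := congrFun (congrFun hid x) 1
    rw [Function.comp_apply, hy1, hxy1] at this
    exact hnc this
  · intro hS
    funext x g
    rw [Function.comp_apply]
    set y := tauP S p a he x with hy
    rw [tauP_apply, if_neg]
    intro H
    have hyg : y g = b := by
      have := H ⟨1, he⟩
      rwa [mul_one] at this
    have hygr : y (g * r) = a := H ⟨r, hr⟩
    have hyrr : y (g * (r * r)) = b := by
      have := H ⟨r * r, hS⟩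
      rw [this]
      exact hq ⟨r * r, hS⟩ hrr_ne_r
    by_cases C : ∀ s : S, x (g * r * s) = p s
    · have hx2 : x (g * r * r) = a := C ⟨r, hr⟩
      have : y (g * (r * r)) = a := by
        rw [hy, tauP_apply]
        split_ifs with h
        · rfl
        · rw [← mul_assoc]
          exact hx2
      exact hnc (this.symm.trans hyrr)
    · have hxgr : x (g * r) = a := by
        rw [hy, tauP_apply, if_neg C] at hygr
        exact hygr
      have pat : ∀ s : S, x (g * s) = p s := by
        intro s
        by_cases hs : (s : G) = r
        · have hseq : s = ⟨r, hr⟩ := Subtype.ext hs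
          rw [hseq]
          exact hxgr
        · have h1 : y (g * s) = b := by rw [H s]; exact hq s hs
          rw [hy, tauP_apply] at h1
          split_ifs at h1 with h2
          · exact absurd h1 hnc
          · rw [h1]
            exact (hq s hs).symm
      have : y g = a := by rw [hy, tauP_apply, if_pos pat]
      exact hnc (this.symm.trans hyg)
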